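/- arXiv:1112.1567 — 3 statements merged into one kernel-verified Lean document; each statement's English description precedes it below -/
import Mathlib

section
/- For k ≥ 1 and l ≥ 1 with k ≠ l, the derived subgroups of GL_k(F_q) and GL_l(F_q) are not isomorphic as groups. -/
namespace StmtAux3
open Matrix
open scoped commutatorElement
variable {F : Type} [Field F] {n : Type} [DecidableEq n] [Fintype n]

/-- transvection as a unit -/
def tvu (i j : n) (hij : i ≠ j) (c : F) : GL n F where
  val := transvection i j c
  inv := transvection i j (-c)
  val_inv := by rw [transvection_mul_transvection_same _ _ hij]; simp
  inv_val := by rw [transvection_mul_transvection_same _ _ hij]; simp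

/-- permutation matrix as a unit -/
def pmu (σ : Equiv.Perm n) : GL n F where
  val := σ.toPEquiv.toMatrix
  inv := σ.symm.toPEquiv.toMatrix
  val_inv := by rw [← PEquiv.toMatrix_trans, ← Equiv.toPEquiv_trans]; simp
  inv_val := by rw [← PEquiv.toMatrix_trans, ← Equiv.toPEquiv_trans]; simp

/-- diagonal units hom -/
def dgu : (n → Fˣ) →* GL n F where
  toFun d := { val := diagonal fun i => (d i : F)
               inv := diagonal fun i => ((d i)⁻¹ : Fˣ)
               val_inv := by rw [diagonal_mul_diagonal]; simp
               inv_val := by rw [diagonal_mul_diagonal]; simp }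
  map_one' := by ext : 1; simp
  map_mul' x y := by ext : 1; simp [diagonal_mul_diagonal]

theorem pair_mem (i j : n) (hij : i ≠ j) (c : Fˣ) :
    dgu (Pi.mulSingle i c * Pi.mulSingle j c⁻¹) ∈ commutator (GL n F) := by
  have key : dgu (Pi.mulSingle i c * Pi.mulSingle j c⁻¹)
      = ⁅dgu (Pi.mulSingle i c), pmu (F := F) (Equiv.swap i j)⁆ := by
    ext : 1
    show (diagonal _ : Matrix n n F) = _
    simp only [commutatorElement_def, Units.val_mul, dgu, pmu, MonoidHom.coe_mk, OneHom.coe_mk,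
      Units.inv_mk]
    rw [mul_assoc, mul_assoc, ← mul_assoc ((Equiv.swap i j).toPEquiv.toMatrix),
      PEquiv.toMatrix_toPEquiv_mul, PEquiv.mul_toMatrix_toPEquiv, Equiv.symm_symm,
      submatrix_submatrix, Function.comp_id, Function.id_comp,
      submatrix_diagonal_equiv, diagonal_mul_diagonal]
    refine congrArg diagonal (funext fun a => ?_)
    rcases eq_or_ne a i with rfl | hai
    · simp [Pi.mulSingle_apply, hij, hij.symm, Equiv.swap_apply_def]
    · rcases eq_or_ne a j with rfl | haj
      · simp [Pi.mulSingle_apply, hij, hij.symm, Equiv.swap_apply_def]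
      · simp [Pi.mulSingle_apply, hai, haj, hai.symm, haj.symm, Equiv.swap_apply_def]
  rw [key, commutator_def]
  exact Subgroup.commutator_mem_commutator (Subgroup.mem_top _) (Subgroup.mem_top _)

theorem dgu_mem [Nontrivial n] (d : n → Fˣ) (hd : ∏ i, d i = 1) :
    dgu d ∈ commutator (GL n F) := by
  classical
  obtain ⟨i0⟩ : Nonempty n := inferInstance
  have key : d = ∏ i, (Pi.mulSingle i (d i) * Pi.mulSingle i0 (d i)⁻¹) := by
    rw [Finset.prod_mul_distrib, Finset.univ_prod_mulSingle]
    have : ∀ x : Fˣ, Pi.mulSingle (M := fun _ : n => Fˣ) i0 x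
        = MonoidHom.mulSingle (fun _ : n => Fˣ) i0 x := fun _ => rfl
    simp only [this]
    rw [← map_prod, Finset.prod_inv_distrib, hd, inv_one, _root_.map_one, mul_one]
  have key2 : d = (Finset.univ.toList.map
      (fun i => Pi.mulSingle i (d i) * Pi.mulSingle i0 (d i)⁻¹)).prod := by
    rw [Finset.prod_map_toList]
    exact key
  rw [key2, map_list_prod]
  refine Subgroup.list_prod_mem _ fun x hx => ?_
  simp only [List.map_map, List.mem_map, Function.comp_apply] at hx
  obtain ⟨i, -, rfl⟩ := hx
  rcases eq_or_ne i i0 with rfl | hi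
  · have : Pi.mulSingle i (d i) * Pi.mulSingle i (d i)⁻¹ = (1 : n → Fˣ) := by
      funext a
      by_cases h : a = i <;> simp [Pi.mulSingle_apply, h]
    rw [this, _root_.map_one]
    exact Subgroup.one_mem _
  · exact pair_mem i i0 hi (d i)

theorem transvection_comm_eq' (i j m : n) (hij : i ≠ j) (him : i ≠ m) (hmj : m ≠ j) (c : F) :
    transvection i m c * transvection m j 1 * transvection i m (-c) * transvection m j (-1)
      = transvection i j c := by
  simp only [transvection]
  simp only [add_mul, mul_add, one_mul, mul_one,
    single_mul_single_same, single_mul_single_of_ne, him.symm, hmj.symm, hij.symm, Ne,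
    not_false_eq_true, mul_zero, zero_mul, add_zero, zero_add, mul_neg, neg_mul]
  ext a b
  simp only [single, Matrix.add_apply, Matrix.of_apply]
  split_ifs <;> simp_all

theorem tvu_mem (h3 : 3 ≤ Fintype.card n) (i j : n) (hij : i ≠ j) (c : F) :
    tvu i j hij c ∈ commutator (GL n F) := by
  have hcompl : (({i, j} : Finset n)ᶜ).Nonempty := by
    rw [← Finset.card_pos, Finset.card_compl]
    have h2 : ({i, j} : Finset n).card ≤ 2 := (Finset.card_insert_le _ _).trans (by simp)
    omega
  obtain ⟨m, hm⟩ := hcompl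
  simp only [Finset.mem_compl, Finset.mem_insert, Finset.mem_singleton, not_or] at hm
  obtain ⟨hmi, hmj⟩ := hm
  have key : tvu i j hij c = ⁅tvu i m (Ne.symm hmi) c, tvu m j hmj 1⁆ := by
    ext : 1
    exact (transvection_comm_eq' i j m hij (Ne.symm hmi) hmj c).symm
  rw [key, commutator_def]
  exact Subgroup.commutator_mem_commutator (Subgroup.mem_top _) (Subgroup.mem_top _)

theorem sl_mem (h3 : 3 ≤ Fintype.card n) (g : GL n F) (hg : (g : Matrix n n F).det = 1) :
    g ∈ commutator (GL n F) := by
  have hn : Nontrivial n := Fintype.one_lt_card_iff_nontrivial.mp (by omega)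
  have main := diagonal_transvection_induction
    (fun N => N.det ≠ 0 → ∀ h : GL n F, (h : Matrix n n F) = N → h ∈ commutator (GL n F))
    (g : Matrix n n F)
    (fun D hD => by
      intro _ h hh
      rw [hg, det_diagonal] at hD
      have hne : ∀ i, D i ≠ 0 := fun i hzero =>
        one_ne_zero (hD ▸ Finset.prod_eq_zero (Finset.mem_univ i) hzero)
      have hh2 : h = dgu fun i => Units.mk0 (D i) (hne i) := by
        ext : 1
        exact hh
      rw [hh2]
      refine dgu_mem _ (Units.ext ?_)
      have := map_prod (Units.coeHom F) (fun i => Units.mk0 (D i) (hne i)) Finset.univ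
      simp only [Units.coeHom_apply] at this
      simpa [this] using hD)
    (fun t => by
      intro _ h hh
      have hh2 : h = tvu t.i t.j t.hij t.c := by ext : 1; exact hh
      rw [hh2]
      exact tvu_mem h3 t.i t.j t.hij t.c)
    (fun A B hA hB => by
      intro hdet h hh
      rw [det_mul] at hdet
      have hdA : IsUnit A := A.isUnit_iff_isUnit_det.mpr
        (isUnit_iff_ne_zero.mpr (left_ne_zero_of_mul hdet))
      have hdB : IsUnit B := B.isUnit_iff_isUnit_det.mpr
        (isUnit_iff_ne_zero.mpr (right_ne_zero_of_mul hdet))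
      have hh2 : h = hdA.unit * hdB.unit := by
        ext : 1
        simp [hh]
      rw [hh2]
      exact Subgroup.mul_mem _
        (hA (left_ne_zero_of_mul hdet) hdA.unit hdA.unit_spec)
        (hB (right_ne_zero_of_mul hdet) hdB.unit hdB.unit_spec))
  exact main (by simp [hg]) g rfl

theorem det_dgu [Fintype F] (d : n → Fˣ) :
    Matrix.GeneralLinearGroup.det (dgu (F := F) d) = ∏ i, d i := by
  ext
  have := map_prod (Units.coeHom F) d Finset.univ
  simp only [Units.coeHom_apply] at this
  simp [dgu, Matrix.GeneralLinearGroup.det, det_diagonal, this]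

theorem det_surj [Fintype F] [Nonempty n] :
    Function.Surjective (Matrix.GeneralLinearGroup.det : GL n F →* Fˣ) := by
  intro u
  obtain ⟨i0⟩ : Nonempty n := inferInstance
  refine ⟨dgu (Pi.mulSingle i0 u), ?_⟩
  rw [det_dgu]
  simp [Finset.prod_pi_mulSingle']

theorem card_GL_lower [Fintype F] (hq : 2 ≤ Fintype.card F) (l : ℕ) (hl : 1 ≤ l) :
    (Fintype.card F) ^ (l * (l - 1)) ≤ Nat.card (GL (Fin l) F) := by
  set q := Fintype.card F
  rw [Matrix.card_GL_field]
  calc q ^ (l * (l - 1)) = ∏ _i : Fin l, q ^ (l - 1) := by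
        rw [Finset.prod_const, Finset.card_univ, Fintype.card_fin, ← pow_mul, Nat.mul_comm]
    _ ≤ ∏ i : Fin l, (q ^ l - q ^ (i : ℕ)) := by
        refine Finset.prod_le_prod (fun _ _ => Nat.zero_le _) (fun i _ => ?_)
        have h1 : q ^ (i : ℕ) ≤ q ^ (l - 1) :=
          Nat.pow_le_pow_right (by omega) (by omega)
        have h2 : q ^ (l - 1) + q ^ (l - 1) ≤ q ^ l := by
          have : 2 * q ^ (l - 1) ≤ q * q ^ (l - 1) := Nat.mul_le_mul_right _ hq
          have hql : q * q ^ (l - 1) = q ^ l := by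
            rw [← pow_succ']
            congr 1
            omega
          omega
        omega

theorem card_GL_upper [Fintype F] (hq : 2 ≤ Fintype.card F) (k : ℕ) (hk : 1 ≤ k) :
    Nat.card (GL (Fin k) F) < (Fintype.card F) ^ (k * k) := by
  set q := Fintype.card F
  rw [Matrix.card_GL_field]
  calc ∏ i : Fin k, (q ^ k - q ^ (i : ℕ)) ≤ ∏ _i : Fin k, (q ^ k - 1) := by
        refine Finset.prod_le_prod (fun _ _ => Nat.zero_le _) (fun i _ => ?_)
        have : 1 ≤ q ^ (i : ℕ) := Nat.one_le_pow _ _ (by omega)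
        omega
    _ < q ^ (k * k) := by
        rw [Finset.prod_const, Finset.card_univ, Fintype.card_fin]
        have h1 : q ^ k - 1 < q ^ k := by
          have : 1 ≤ q ^ k := Nat.one_le_pow _ _ (by omega)
          omega
        calc (q ^ k - 1) ^ k < (q ^ k) ^ k :=
              Nat.pow_lt_pow_left h1 (by omega)
          _ = q ^ (k * k) := by rw [← pow_mul]

theorem comm_card_lower [Fintype F] (l : ℕ) (hl3 : 3 ≤ l) :
    Nat.card (GL (Fin l) F) ≤
      (Fintype.card F - 1) * Nat.card (commutator (GL (Fin l) F)) := by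
  have h3 : 3 ≤ Fintype.card (Fin l) := by simp [hl3]
  set φ : GL (Fin l) F →* Fˣ := Matrix.GeneralLinearGroup.det
  have hker : φ.ker ≤ commutator (GL (Fin l) F) := by
    intro g hg
    refine sl_mem h3 g ?_
    have := congrArg Units.val (MonoidHom.mem_ker.mp hg)
    simpa [φ, Matrix.GeneralLinearGroup.det] using this
  have hl : Nonempty (Fin l) := ⟨⟨0, by omega⟩⟩
  have hsurj : Function.Surjective φ := det_surj
  have hcard : Nat.card (GL (Fin l) F) = (Fintype.card F - 1) * Nat.card φ.ker := by
    rw [Subgroup.card_eq_card_quotient_mul_card_subgroup φ.ker]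
    congr 1
    rw [Nat.card_congr (QuotientGroup.quotientKerEquivOfSurjective φ hsurj).toEquiv]
    rw [Nat.card_units, Nat.card_eq_fintype_card]
  rw [hcard]
  exact Nat.mul_le_mul_left _ (Subgroup.card_le_of_le hker)

theorem comm_GL1_eq_bot : commutator (GL (Fin 1) F) = ⊥ := by
  rw [commutator, ← le_bot_iff, Subgroup.commutator_le]
  intro a _ b _
  rw [Subgroup.mem_bot, commutatorElement_eq_one_iff_mul_comm]
  ext i j
  have hi : i = 0 := Subsingleton.elim _ _
  have hj : j = 0 := Subsingleton.elim _ _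
  subst hi hj
  simp only [Matrix.GeneralLinearGroup.coe_mul, Matrix.mul_apply, Finset.univ_unique,
    Fin.default_eq_zero, Finset.sum_singleton]
  exact mul_comm _ _

theorem comm_GL_ne_bot (l : ℕ) (hl : 2 ≤ l) : commutator (GL (Fin l) F) ≠ ⊥ := by
  intro hbot
  set i0 : Fin l := ⟨0, by omega⟩
  set i1 : Fin l := ⟨1, by omega⟩
  have hne : i0 ≠ i1 := by simp [i0, i1, Fin.ext_iff]
  have hmem : ⁅tvu i0 i1 hne (1 : F), tvu i1 i0 hne.symm (1 : F)⁆
      ∈ commutator (GL (Fin l) F) :=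
    Subgroup.commutator_mem_commutator (Subgroup.mem_top _) (Subgroup.mem_top _)
  rw [hbot, Subgroup.mem_bot, commutatorElement_eq_one_iff_mul_comm] at hmem
  have := congrArg (fun M : GL (Fin l) F => (M : Matrix (Fin l) (Fin l) F) i0 i0) hmem
  simp only [Matrix.GeneralLinearGroup.coe_mul, tvu, Units.val_mk] at this
  rw [transvection_mul_apply_same, transvection_mul_apply_of_ne i1 i0 i0 i0 hne] at this
  simp [transvection, single, Matrix.one_apply, hne, hne.symm] at this

theorem main_lt [Fintype F] (k l : ℕ) (hk : 1 ≤ k) (hkl : k < l) :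
    IsEmpty (↥(commutator (Matrix.GeneralLinearGroup (Fin k) F)) ≃*
      ↥(commutator (Matrix.GeneralLinearGroup (Fin l) F))) := by
  constructor
  intro e
  have hq : 2 ≤ Fintype.card F := Fintype.one_lt_card
  have hcard : Nat.card (commutator (GL (Fin k) F)) =
      Nat.card (commutator (GL (Fin l) F)) := Nat.card_congr e.toEquiv
  rcases eq_or_lt_of_le hk with hk1 | hk2
  · -- k = 1
    have hbot : commutator (GL (Fin k) F) = ⊥ := by
      subst hk1
      exact comm_GL1_eq_bot
    rw [hbot, Subgroup.card_bot] at hcard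
    exact comm_GL_ne_bot l (by omega) (Subgroup.card_eq_one.mp hcard.symm)
  · -- 2 ≤ k, 3 ≤ l
    set q := Fintype.card F with hqdef
    have h1 : Nat.card (commutator (GL (Fin k) F)) ≤ Nat.card (GL (Fin k) F) :=
      Subgroup.card_le_card_group _
    have h2 := card_GL_upper (F := F) hq k hk
    have h3 := comm_card_lower (F := F) l (by omega)
    have h4 := card_GL_lower (F := F) hq l (by omega)
    set N := q ^ (k * k) with hN
    set C := Nat.card (commutator (GL (Fin l) F)) with hC
    have hCN : C < N := by omega
    have hpow : q ^ (k * k + 1) ≤ q ^ (l * (l - 1)) := by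
      refine Nat.pow_le_pow_right (by omega) ?_
      have : (k + 1) * k ≤ l * (l - 1) := Nat.mul_le_mul (by omega) (by omega)
      nlinarith
    have hqN : q * N ≤ (q - 1) * C := by
      calc q * N = q ^ (k * k + 1) := by rw [hN, pow_succ, Nat.mul_comm]
        _ ≤ q ^ (l * (l - 1)) := hpow
        _ ≤ Nat.card (GL (Fin l) F) := h4
        _ ≤ (q - 1) * C := h3
    have hfin : (q - 1) * C < q * N :=
      Nat.mul_lt_mul'' (by omega) hCN
    omega

end StmtAux3

/-- For `k, l ≥ 1` with `k ≠ l`, the derived subgroups of `GL_k(F_q)` and `GL_l(F_q)`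
(over the same finite field) are not isomorphic as groups. -/
theorem stmt_3 (F : Type) [Field F] [Fintype F] (k l : ℕ)
    (hk : 1 ≤ k) (hl : 1 ≤ l) (hkl : k ≠ l) :
    IsEmpty (↥(commutator (Matrix.GeneralLinearGroup (Fin k) F)) ≃*
      ↥(commutator (Matrix.GeneralLinearGroup (Fin l) F))) := by
  rcases hkl.lt_or_gt with h | h
  · exact StmtAux3.main_lt k l hk h
  · have := StmtAux3.main_lt (F := F) l k hl h
    constructor
    intro e
    exact this.elim e.symm
end

section
/- Let G, G' be groups, R a field, and V a finitely generated projective R[G]-module, V' a finitely generated projective R[G']-module. Then there is an isomorphism of R-algebras End_{R[G]}(V) ⊗_R End_{R[G']}(V') ≅ End_{R[G×G']}(V ⊠ V'). -/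
open TensorProduct

set_option synthInstance.maxHeartbeats 1000000
set_option maxHeartbeats 1000000

/-- The outer tensor product of a `G`-representation and a `G'`-representation. -/
noncomputable def outerTprod {R G G' V V' : Type} [CommSemiring R] [Monoid G] [Monoid G']
    [AddCommMonoid V] [Module R V] [AddCommMonoid V'] [Module R V']
    (ρ : Representation R G V) (ρ' : Representation R G' V') :
    Representation R (G × G') (V ⊗[R] V') where
  toFun p := TensorProduct.map (ρ p.1) (ρ' p.2)
  map_one' := by simp [TensorProduct.map_one]
  map_mul' p q := by simp [TensorProduct.map_mul]

/-- The algebra of `G`-equivariant `R`-linear endomorphisms of a representation,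
i.e. `End_{R[G]}(V)`, realised as the centralizer of the image of `G` in `End_R(V)`. -/
def equivariantEnd {R G V : Type} [CommSemiring R] [Monoid G] [AddCommMonoid V]
    [Module R V] (ρ : Representation R G V) : Subalgebra R (Module.End R V) :=
  Subalgebra.centralizer R (Set.range fun g : G => (ρ g : Module.End R V))

section AuxDB

variable {R G V : Type} [CommSemiring R] [Monoid G] [AddCommMonoid V] [Module R V]

/-- Dual-basis presentation of a finitely generated projective module over the
monoid algebra, phrased in terms of the representation. -/
theorem Representation.exists_dual_basis (ρ : Representation R G V)
    [Module.Finite (MonoidAlgebra R G) ρ.asModule]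
    [Module.Projective (MonoidAlgebra R G) ρ.asModule] :
    ∃ (n : ℕ) (x : Fin n → V) (f : Fin n → (V →ₗ[R] MonoidAlgebra R G)),
      (∀ (i : Fin n) (g : G) (v : V), f i (ρ g v) = MonoidAlgebra.of R G g * f i v) ∧
      (∀ v : V, ∑ i, ρ.asAlgebraHom (f i v) (x i) = v) := by
  obtain ⟨n, p, σ, hsurj, hinj, hpσ⟩ :=
    Module.Finite.exists_comp_eq_id_of_projective (MonoidAlgebra R G) ρ.asModule
  refine ⟨n, fun i => ρ.asModuleEquiv (p (Pi.single i 1)), fun i =>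
    { toFun := fun v => σ (ρ.asModuleEquiv.symm v) i
      map_add' := fun v w => by
        show σ (ρ.asModuleEquiv.symm (v + w)) i = _
        rw [map_add, map_add]; rfl
      map_smul' := fun r v => by
        show σ (ρ.asModuleEquiv.symm (r • v)) i = r • σ (ρ.asModuleEquiv.symm v) i
        rw [ρ.asModuleEquiv_symm_map_smul, map_smul, Pi.smul_apply,
          smul_eq_mul, ← Algebra.smul_def] }, fun i g v => ?_, fun v => ?_⟩
  · simp only [LinearMap.coe_mk, AddHom.coe_mk]
    rw [ρ.asModuleEquiv_symm_map_rho, map_smul, Pi.smul_apply, smul_eq_mul]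
  · simp only [LinearMap.coe_mk, AddHom.coe_mk]
    conv_rhs => rw [← ρ.asModuleEquiv.apply_symm_apply v]
    set m := ρ.asModuleEquiv.symm v with hm
    have h1 : p (σ m) = m := by
      have := congrArg (fun q : ρ.asModule →ₗ[MonoidAlgebra R G] ρ.asModule => q m) hpσ
      simpa using this
    have h2 : ∀ i : Fin n, ρ.asAlgebraHom (σ m i) (ρ.asModuleEquiv (p (Pi.single i 1)))
        = ρ.asModuleEquiv (p (Pi.single i (σ m i))) := fun i => by
      rw [← ρ.asModuleEquiv_map_smul, ← map_smul p]
      congr 2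
      rw [← Pi.single_smul, smul_eq_mul, mul_one]
    rw [Finset.sum_congr rfl fun i _ => h2 i, ← map_sum, ← map_sum, Finset.univ_sum_single, h1]

end AuxDB

section AuxComm

variable {R G V : Type} [CommSemiring R] [Monoid G] [AddCommMonoid V] [Module R V]

theorem comm_of_mem_equivariantEnd {ρ : Representation R G V} {S : Module.End R V}
    (hS : S ∈ equivariantEnd ρ) (a : MonoidAlgebra R G) :
    ρ.asAlgebraHom a * S = S * ρ.asAlgebraHom a := by
  have hg : ∀ g : G, (ρ g : Module.End R V) * S = S * ρ g := fun g =>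
    (Subalgebra.mem_centralizer_iff R).mp hS _ ⟨g, rfl⟩
  induction a using MonoidAlgebra.induction_linear with
  | zero => simp
  | add a b ha hb => rw [map_add, add_mul, mul_add, ha, hb]
  | single g r =>
    rw [Representation.asAlgebraHom_single, smul_mul_assoc, mul_smul_comm, hg]

theorem comm_of_mem_equivariantEnd' {ρ : Representation R G V} {S : Module.End R V}
    (hS : S ∈ equivariantEnd ρ) (a : MonoidAlgebra R G) (v : V) :
    ρ.asAlgebraHom a (S v) = S (ρ.asAlgebraHom a v) :=
  DFunLike.congr_fun (comm_of_mem_equivariantEnd hS a) v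

/-- `v ↦ ρ.asAlgebraHom (f v) m` is an equivariant endomorphism, linearly in `m`. -/
noncomputable def coeffEnd (ρ : Representation R G V) (f : V →ₗ[R] MonoidAlgebra R G)
    (hf : ∀ (g : G) (v : V), f (ρ g v) = MonoidAlgebra.of R G g * f v) :
    V →ₗ[R] equivariantEnd ρ where
  toFun m := ⟨{ toFun := fun v => ρ.asAlgebraHom (f v) m
                map_add' := fun v w => by
                  show ρ.asAlgebraHom (f (v + w)) m = _
                  rw [map_add, map_add, LinearMap.add_apply]
                map_smul' := fun r v => by
                  show ρ.asAlgebraHom (f (r • v)) m = r • ρ.asAlgebraHom (f v) m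
                  rw [map_smul, map_smul, LinearMap.smul_apply] },
      by
        refine (Subalgebra.mem_centralizer_iff R).mpr ?_
        rintro _ ⟨g, rfl⟩
        ext v
        show ρ g (ρ.asAlgebraHom (f v) m) = ρ.asAlgebraHom (f (ρ g v)) m
        rw [hf, map_mul, ρ.asAlgebraHom_of]
        rfl⟩
  map_add' m m' := Subtype.ext (LinearMap.ext fun v => by simp)
  map_smul' r m := Subtype.ext (LinearMap.ext fun v => by simp)

@[simp] theorem coeffEnd_apply (ρ : Representation R G V) (f : V →ₗ[R] MonoidAlgebra R G)
    (hf : ∀ (g : G) (v : V), f (ρ g v) = MonoidAlgebra.of R G g * f v) (m v : V) :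
    ((coeffEnd ρ f hf m : Module.End R V)) v = ρ.asAlgebraHom (f v) m := rfl

end AuxComm

/-- If `V` is a finitely generated projective `R[G]`-module and `V'` a finitely generated
projective `R[G']`-module, then
`End_{R[G]}(V) ⊗[R] End_{R[G']}(V') ≅ End_{R[G×G']}(V ⊠ V')` as `R`-algebras. -/
theorem stmt_8 (R : Type) [Field R] (G G' : Type) [Group G] [Group G']
    (V V' : Type) [AddCommGroup V] [Module R V] [AddCommGroup V'] [Module R V']
    (ρ : Representation R G V) (ρ' : Representation R G' V')
    (hVf : Module.Finite (MonoidAlgebra R G) ρ.asModule)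
    (hVp : Module.Projective (MonoidAlgebra R G) ρ.asModule)
    (hV'f : Module.Finite (MonoidAlgebra R G') ρ'.asModule)
    (hV'p : Module.Projective (MonoidAlgebra R G') ρ'.asModule) :
    Nonempty ((↥(equivariantEnd ρ) ⊗[R] ↥(equivariantEnd ρ')) ≃ₐ[R]
      ↥(equivariantEnd (outerTprod ρ ρ'))) := by
  classical
  haveI := hVf; haveI := hVp; haveI := hV'f; haveI := hV'p
  obtain ⟨n, x, f, hfe, hfx⟩ := ρ.exists_dual_basis
  obtain ⟨n', y, gg, hge, hgy⟩ := ρ'.exists_dual_basis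
  set A' := equivariantEnd ρ with hA'
  set B' := equivariantEnd ρ' with hB'
  -- the forward algebra hom
  let Φ : (A' ⊗[R] B') →ₐ[R] Module.End R (V ⊗[R] V') :=
    (Module.endTensorEndAlgHom (R := R) (S := R) (A := R) (M := V) (N := V')).comp
      (Algebra.TensorProduct.map A'.val B'.val)
  have hΦ : ∀ (S : A') (S' : B') (m : V) (m' : V'),
      Φ (S ⊗ₜ S') (m ⊗ₜ m') = (S : Module.End R V) m ⊗ₜ (S' : Module.End R V') m' := by
    intro S S' m m'
    rfl
  -- pointwise commutation with group elements
  have hpt : ∀ (S : Module.End R V), S ∈ A' → ∀ (g : G) (v : V), ρ g (S v) = S (ρ g v) :=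
    fun S hS g v => DFunLike.congr_fun ((Subalgebra.mem_centralizer_iff R).mp hS _ ⟨g, rfl⟩) v
  have hpt' : ∀ (S : Module.End R V'), S ∈ B' → ∀ (g : G') (v : V'), ρ' g (S v) = S (ρ' g v) :=
    fun S hS g v => DFunLike.congr_fun ((Subalgebra.mem_centralizer_iff R).mp hS _ ⟨g, rfl⟩) v
  -- the range of Φ consists of equivariant endomorphisms
  have hrange : ∀ t : A' ⊗[R] B', Φ t ∈ equivariantEnd (outerTprod ρ ρ') := by
    intro t
    refine (Subalgebra.mem_centralizer_iff R).mpr ?_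
    rintro _ ⟨⟨g, g'⟩, rfl⟩
    induction t with
    | zero => rw [map_zero, mul_zero, zero_mul]
    | add t1 t2 h1 h2 => rw [map_add, mul_add, add_mul, h1, h2]
    | tmul S S' =>
      refine TensorProduct.ext' fun m m' => ?_
      rw [Module.End.mul_apply, Module.End.mul_apply]
      have ho : ∀ (a : V) (b : V'),
          (outerTprod ρ ρ') (g, g') (a ⊗ₜ[R] b) = ρ g a ⊗ₜ[R] ρ' g' b := fun a b => rfl
      rw [hΦ, ho, ho, hΦ, hpt S.1 S.2 g m, hpt' S'.1 S'.2 g' m']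
  -- the generators and the inverse map
  let Sg : Fin n → V →ₗ[R] A' := fun i => coeffEnd ρ (f i) (hfe i)
  let Sg' : Fin n' → V' →ₗ[R] B' := fun j => coeffEnd ρ' (gg j) (hge j)
  let Ψ : Module.End R (V ⊗[R] V') → (A' ⊗[R] B') := fun T =>
    ∑ i, ∑ j, TensorProduct.map (Sg i) (Sg' j) (T (x i ⊗ₜ[R] y j))
  -- Ψ is a left inverse of Φ
  have K1 : ∀ t : A' ⊗[R] B', Ψ (Φ t) = t := by
    intro t
    induction t with
    | zero => simp [Ψ]
    | add t1 t2 h1 h2 =>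
      simp only [Ψ, map_add, LinearMap.add_apply, Finset.sum_add_distrib] at h1 h2 ⊢
      rw [h1, h2]
    | tmul S S' =>
      show ∑ i, ∑ j, TensorProduct.map (Sg i) (Sg' j) (Φ (S ⊗ₜ S') (x i ⊗ₜ y j)) = S ⊗ₜ S'
      have e0 : ∀ (i : Fin n) (j : Fin n'),
          TensorProduct.map (Sg i) (Sg' j) (Φ (S ⊗ₜ S') (x i ⊗ₜ y j))
            = (Sg i ((S : Module.End R V) (x i))) ⊗ₜ[R]
              (Sg' j ((S' : Module.End R V') (y j))) := fun i j => by
        rw [hΦ, TensorProduct.map_tmul]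
      rw [Finset.sum_congr rfl fun i _ => Finset.sum_congr rfl fun j _ => e0 i j]
      rw [Finset.sum_congr rfl fun i _ => (TensorProduct.tmul_sum _ _ _).symm,
        ← TensorProduct.sum_tmul]
      have c1 : (∑ i, Sg i ((S : Module.End R V) (x i))) = S := by
        apply Subtype.ext
        rw [AddSubmonoidClass.coe_finset_sum]
        refine LinearMap.ext fun v => ?_
        rw [LinearMap.sum_apply]
        have e1 : ∀ i : Fin n, ((Sg i ((S : Module.End R V) (x i)) : A') : Module.End R V) v
            = (S : Module.End R V) (ρ.asAlgebraHom (f i v) (x i)) := fun i =>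
          comm_of_mem_equivariantEnd' S.2 (f i v) (x i)
        rw [Finset.sum_congr rfl fun i _ => e1 i, ← map_sum, hfx]
      have c2 : (∑ j, Sg' j ((S' : Module.End R V') (y j))) = S' := by
        apply Subtype.ext
        rw [AddSubmonoidClass.coe_finset_sum]
        refine LinearMap.ext fun v => ?_
        rw [LinearMap.sum_apply]
        have e1 : ∀ j : Fin n', ((Sg' j ((S' : Module.End R V') (y j)) : B') : Module.End R V') v
            = (S' : Module.End R V') (ρ'.asAlgebraHom (gg j v) (y j)) := fun j =>
          comm_of_mem_equivariantEnd' S'.2 (gg j v) (y j)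
        rw [Finset.sum_congr rfl fun j _ => e1 j, ← map_sum, hgy]
      rw [c1, c2]
  -- commutation of equivariant endomorphisms of the tensor product with rTensor/lTensor
  have hTr : ∀ (Tm : Module.End R (V ⊗[R] V')), Tm ∈ equivariantEnd (outerTprod ρ ρ') →
      ∀ (a : MonoidAlgebra R G) (z : V ⊗[R] V'),
      LinearMap.rTensor V' (ρ.asAlgebraHom a) (Tm z)
        = Tm (LinearMap.rTensor V' (ρ.asAlgebraHom a) z) := by
    intro Tm hT a
    have key : LinearMap.rTensor V' (ρ.asAlgebraHom a) * Tm
        = Tm * LinearMap.rTensor V' (ρ.asAlgebraHom a) := by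
      induction a using MonoidAlgebra.induction_linear with
      | zero => rw [map_zero, LinearMap.rTensor_zero, zero_mul, mul_zero]
      | add a b ha hb => rw [map_add, LinearMap.rTensor_add, add_mul, mul_add, ha, hb]
      | single g r =>
        rw [Representation.asAlgebraHom_single, LinearMap.rTensor_smul, smul_mul_assoc,
          mul_smul_comm]
        congr 1
        have hc := (Subalgebra.mem_centralizer_iff R).mp hT _ ⟨((g : G), (1 : G')), rfl⟩
        have ho : (outerTprod ρ ρ' ((g : G), (1 : G')) : Module.End R (V ⊗[R] V'))
            = LinearMap.rTensor V' (ρ g) := by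
          show TensorProduct.map (ρ g) (ρ' 1) = _
          rw [map_one]
          rfl
        rw [← ho]
        exact hc
    exact fun z => DFunLike.congr_fun key z
  have hTl : ∀ (Tm : Module.End R (V ⊗[R] V')), Tm ∈ equivariantEnd (outerTprod ρ ρ') →
      ∀ (b : MonoidAlgebra R G') (z : V ⊗[R] V'),
      LinearMap.lTensor V (ρ'.asAlgebraHom b) (Tm z)
        = Tm (LinearMap.lTensor V (ρ'.asAlgebraHom b) z) := by
    intro Tm hT b
    have key : LinearMap.lTensor V (ρ'.asAlgebraHom b) * Tm
        = Tm * LinearMap.lTensor V (ρ'.asAlgebraHom b) := by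
      induction b using MonoidAlgebra.induction_linear with
      | zero => rw [map_zero, LinearMap.lTensor_zero, zero_mul, mul_zero]
      | add a b ha hb => rw [map_add, LinearMap.lTensor_add, add_mul, mul_add, ha, hb]
      | single g r =>
        rw [Representation.asAlgebraHom_single, LinearMap.lTensor_smul, smul_mul_assoc,
          mul_smul_comm]
        congr 1
        have hc := (Subalgebra.mem_centralizer_iff R).mp hT _ ⟨((1 : G), (g : G')), rfl⟩
        have ho : (outerTprod ρ ρ' ((1 : G), (g : G')) : Module.End R (V ⊗[R] V'))
            = LinearMap.lTensor V (ρ' g) := by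
          show TensorProduct.map (ρ 1) (ρ' g) = _
          rw [map_one]
          rfl
        rw [← ho]
        exact hc
    exact fun z => DFunLike.congr_fun key z
  -- Ψ is a right inverse of Φ on equivariant endomorphisms
  have K2 : ∀ (Tm : Module.End R (V ⊗[R] V')), Tm ∈ equivariantEnd (outerTprod ρ ρ') →
      Φ (Ψ Tm) = Tm := by
    intro Tm hT
    refine TensorProduct.ext' fun m m' => ?_
    show Φ (∑ i, ∑ j, TensorProduct.map (Sg i) (Sg' j) (Tm (x i ⊗ₜ[R] y j))) (m ⊗ₜ[R] m')
      = Tm (m ⊗ₜ[R] m')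
    simp only [map_sum, LinearMap.sum_apply]
    have step1 : ∀ (i : Fin n) (j : Fin n') (w : V ⊗[R] V'),
        Φ (TensorProduct.map (Sg i) (Sg' j) w) (m ⊗ₜ[R] m')
          = TensorProduct.map (ρ.asAlgebraHom (f i m)) (ρ'.asAlgebraHom (gg j m')) w := by
      intro i j w
      induction w with
      | zero => simp
      | add w1 w2 h1 h2 => rw [map_add, map_add, LinearMap.add_apply, h1, h2, map_add]
      | tmul a b =>
        rw [TensorProduct.map_tmul, hΦ, TensorProduct.map_tmul]
        rfl
    have step2 : ∀ (i : Fin n) (j : Fin n'),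
        TensorProduct.map (ρ.asAlgebraHom (f i m)) (ρ'.asAlgebraHom (gg j m'))
            (Tm (x i ⊗ₜ[R] y j))
          = Tm ((ρ.asAlgebraHom (f i m) (x i)) ⊗ₜ[R] (ρ'.asAlgebraHom (gg j m') (y j))) := by
      intro i j
      have hmap : ∀ (z : V ⊗[R] V'),
          TensorProduct.map (ρ.asAlgebraHom (f i m)) (ρ'.asAlgebraHom (gg j m')) z
            = LinearMap.rTensor V' (ρ.asAlgebraHom (f i m))
                (LinearMap.lTensor V (ρ'.asAlgebraHom (gg j m')) z) := fun z => by
        induction z with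
        | zero => simp
        | add z1 z2 h1 h2 => simp only [map_add, h1, h2]
        | tmul a b => simp
      rw [hmap, hTl Tm hT _ _, hTr Tm hT _ _]
      rw [LinearMap.lTensor_tmul, LinearMap.rTensor_tmul]
    rw [Finset.sum_congr rfl fun i _ => Finset.sum_congr rfl fun j _ =>
      (step1 i j _).trans (step2 i j)]
    rw [Finset.sum_congr rfl fun i _ => (map_sum Tm _ _).symm, ← map_sum Tm]
    congr 1
    rw [Finset.sum_congr rfl fun i _ => (TensorProduct.tmul_sum _ _ _).symm,
      ← TensorProduct.sum_tmul, hfx, hgy]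
  -- conclude
  let Φ' : (A' ⊗[R] B') →ₐ[R] (equivariantEnd (outerTprod ρ ρ')) :=
    Φ.codRestrict _ hrange
  refine ⟨AlgEquiv.ofBijective Φ' ⟨fun t1 t2 h => ?_, fun T => ?_⟩⟩
  · have hΦeq : Φ t1 = Φ t2 := congrArg Subtype.val h
    rw [← K1 t1, ← K1 t2, hΦeq]
  · exact ⟨Ψ T.1, Subtype.ext (K2 T.1 T.2)⟩
end

section
/- Let Γ be a profinite group, H a closed normal subgroup such that Γ/H is a finite ℓ-group, and R an algebraically closed field of characteristic ℓ. If χ is a smooth R-valued character of H which extends to a character of Γ, then the induced representation ind_H^Γ(χ) is indecomposable. -/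
/-- The space of the induced representation `ind_H^Γ(χ)`: functions `f : Γ → R` with
`f (h * g) = χ h * f g` for `h ∈ H`. (Since `Γ/H` is finite, compact support mod `H` is
automatic, and smoothness of such functions follows from smoothness of `χ`.) -/
def indSpace (Γ R : Type) [Group Γ] [Field R] (H : Subgroup Γ) (χ : ↥H →* Rˣ) :
    Submodule R (Γ → R) where
  carrier := {f | ∀ (h : ↥H) (g : Γ), f (↑h * g) = (χ h : R) * f g}
  add_mem' := by
    intro a b ha hb h g
    simp only [Pi.add_apply, ha h g, hb h g]
    ring
  zero_mem' := by intro h g; simp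
  smul_mem' := by
    intro c f hf h g
    simp only [Pi.smul_apply, smul_eq_mul, hf h g]
    ring

/-- The action of `γ ∈ Γ` on the induced representation, by right translation. -/
def translateInd (Γ R : Type) [Group Γ] [Field R] (H : Subgroup Γ) (χ : ↥H →* Rˣ)
    (γ : Γ) : ↥(indSpace Γ R H χ) →ₗ[R] ↥(indSpace Γ R H χ) where
  toFun f := ⟨fun x => f.1 (x * γ), fun h g => by simpa [mul_assoc] using f.2 h (g * γ)⟩
  map_add' f g := by ext x; rfl
  map_smul' c f := by ext x; rfl


section Aux

/-- If a finite `p`-group acts linearly (via a monoid hom to endomorphisms) on a module over a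
field of characteristic `p`, then any nonzero vector produces a nonzero fixed vector lying in the
`R`-span of its orbit. -/
lemma aux_fixed (p : ℕ) (hp : p.Prime) (G : Type) [Group G] [Finite G]
    (hG : IsPGroup p G) (R : Type) [Field R] (hchar : CharP R p)
    (M : Type) [AddCommGroup M] [Module R M]
    (ρ : G →* Module.End R M) (v : M) (hv : v ≠ 0) :
    ∃ w : M, w ≠ 0 ∧ (∀ g, ρ g w = w) ∧
      w ∈ Submodule.span R (Set.range fun g => ρ g v) := by
  haveI : Fact p.Prime := ⟨hp⟩
  letI : Algebra (ZMod p) R := ZMod.algebra R p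
  letI : Module (ZMod p) M := Module.compHom M (algebraMap (ZMod p) R)
  haveI : IsScalarTower (ZMod p) R M :=
    ⟨fun c r m => by
      show (algebraMap (ZMod p) R c * r) • m = algebraMap (ZMod p) R c • (r • m)
      rw [mul_smul]⟩
  set S : Set M := Set.range fun g => ρ g v with hS
  have hSfin : S.Finite := Set.finite_range _
  set V : Submodule (ZMod p) M := Submodule.span (ZMod p) S with hV
  haveI : Module.Finite (ZMod p) V := Module.Finite.span_of_finite _ hSfin
  haveI : Finite V := Module.finite_of_finite (ZMod p)
  -- ZMod p linearity of ρ g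
  have hlin : ∀ (g : G) (c : ZMod p) (x : M), ρ g (c • x) = c • ρ g x := by
    intro g c x
    show ρ g ((algebraMap (ZMod p) R c) • x) = (algebraMap (ZMod p) R c) • ρ g x
    exact (ρ g).map_smul _ _
  -- V is invariant
  have hinv : ∀ (g : G), ∀ x ∈ V, ρ g x ∈ V := by
    intro g x hx
    induction hx using Submodule.span_induction with
    | mem y hy =>
      obtain ⟨h, rfl⟩ := hy
      refine Submodule.subset_span ⟨g * h, ?_⟩
      show ρ (g * h) v = ρ g (ρ h v)
      rw [map_mul]; rfl
    | zero => simpa using V.zero_mem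
    | add y z _ _ hy hz => rw [map_add]; exact V.add_mem hy hz
    | smul c y _ hy => rw [hlin]; exact V.smul_mem c hy
  letI : MulAction G V :=
    { smul := fun g x => ⟨ρ g x, hinv g x x.2⟩
      one_smul := fun x => Subtype.ext (by show ρ 1 x.1 = x.1; rw [map_one]; rfl)
      mul_smul := fun g h x => Subtype.ext (by show ρ (g * h) x.1 = ρ g (ρ h x.1); rw [map_mul]; rfl) }
  have hsmul_def : ∀ (g : G) (x : V), (g • x : V).1 = ρ g x.1 := fun _ _ => rfl
  have h0 : (0 : V) ∈ MulAction.fixedPoints G V := by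
    intro g
    exact Subtype.ext (by show ρ g (0 : M) = 0; simp)
  have hvV : v ∈ V := Submodule.subset_span ⟨1, by simp⟩
  -- p divides the cardinality of V
  have hord : p ∣ Nat.card V := by
    have hps : p • (⟨v, hvV⟩ : V) = 0 := by
      apply Subtype.ext
      show p • v = (0 : M)
      rw [← Nat.cast_smul_eq_nsmul (ZMod p) p v, ZMod.natCast_self, zero_smul]
    have h1 : addOrderOf (⟨v, hvV⟩ : V) ∣ p := addOrderOf_dvd_of_nsmul_eq_zero hps
    have h2 : addOrderOf (⟨v, hvV⟩ : V) = p := by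
      rcases (Nat.Prime.eq_one_or_self_of_dvd hp _ h1) with h | h
      · exfalso
        rw [AddMonoid.addOrderOf_eq_one_iff] at h
        exact hv (congrArg Subtype.val h)
      · exact h
    haveI : Fintype V := Fintype.ofFinite V
    have h3 : addOrderOf (⟨v, hvV⟩ : V) ∣ Fintype.card V := addOrderOf_dvd_card
    rw [h2] at h3
    rwa [Nat.card_eq_fintype_card]
  obtain ⟨b, hbfix, hb0⟩ :=
    hG.exists_fixed_point_of_prime_dvd_card_of_fixed_point V hord h0
  refine ⟨b.1, fun h => hb0 (Subtype.ext h.symm), fun g => ?_, ?_⟩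
  · have := hbfix g
    exact congrArg Subtype.val this
  · have hle : Submodule.span (ZMod p) S ≤ (Submodule.span R S).restrictScalars (ZMod p) :=
      Submodule.span_le.2 Submodule.subset_span
    exact hle b.2

end Aux

section Main

variable {Γ R : Type} [Group Γ] [Field R] {H : Subgroup Γ} {χ : ↥H →* Rˣ}

@[simp] lemma translateInd_coe (γ : Γ) (f : ↥(indSpace Γ R H χ)) (x : Γ) :
    ((translateInd Γ R H χ γ f : ↥(indSpace Γ R H χ)) : Γ → R) x = (f : Γ → R) (x * γ) := rfl

/-- The twisted action `γ ↦ χt(γ)⁻¹ ⬝ (right translation by γ)` on the induced space. -/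
def indRho (χt : Γ →* Rˣ) : Γ →* Module.End R ↥(indSpace Γ R H χ) where
  toFun γ := ((χt γ : R))⁻¹ • translateInd Γ R H χ γ
  map_one' := by
    apply LinearMap.ext; intro f
    apply Subtype.ext; funext x
    show (χt 1 : R)⁻¹ * (f : Γ → R) (x * 1) = (f : Γ → R) x
    simp
  map_mul' γ δ := by
    apply LinearMap.ext; intro f
    apply Subtype.ext; funext x
    show (χt (γ * δ) : R)⁻¹ * (f : Γ → R) (x * (γ * δ)) =
      (χt γ : R)⁻¹ * ((χt δ : R)⁻¹ * (f : Γ → R) (x * γ * δ))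
    rw [map_mul, Units.val_mul, mul_inv, ← mul_assoc x, mul_assoc]

lemma indRho_apply (χt : Γ →* Rˣ) (γ : Γ) (f : ↥(indSpace Γ R H χ)) (x : Γ) :
    ((indRho (H := H) (χ := χ) χt γ f : ↥(indSpace Γ R H χ)) : Γ → R) x
      = (χt γ : R)⁻¹ * (f : Γ → R) (x * γ) := rfl

end Main

/-- Let `Γ` be a profinite group, `H` a closed normal subgroup with `Γ/H` a finite
`ℓ`-group, and `R` an algebraically closed field of characteristic `ℓ`. If `χ` is a
smooth `R`-valued character of `H` which extends to a character of `Γ`, then the induced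
representation `ind_H^Γ(χ)` is indecomposable: for any two `Γ`-stable subspaces forming a
direct sum decomposition, one of them is zero. -/
theorem stmt_12 (ℓ : ℕ) (hℓ : ℓ.Prime)
    (Γ : Type) [Group Γ] [TopologicalSpace Γ] [IsTopologicalGroup Γ]
    [CompactSpace Γ] [TotallyDisconnectedSpace Γ] [T2Space Γ]
    (H : Subgroup Γ) [H.Normal] (hclosed : IsClosed (H : Set Γ))
    [Finite (Γ ⧸ H)] (hpgroup : IsPGroup ℓ (Γ ⧸ H))
    (R : Type) [Field R] [IsAlgClosed R] (hchar : CharP R ℓ)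
    (χ : ↥H →* Rˣ) (hsmooth : IsOpen ((χ.ker : Subgroup ↥H) : Set ↥H))
    (hext : ∃ χt : Γ →* Rˣ, ∀ h : ↥H, χt ↑h = χ h)
    (W₁ W₂ : Submodule R ↥(indSpace Γ R H χ))
    (hW₁ : ∀ γ : Γ, ∀ f ∈ W₁, translateInd Γ R H χ γ f ∈ W₁)
    (hW₂ : ∀ γ : Γ, ∀ f ∈ W₂, translateInd Γ R H χ γ f ∈ W₂)
    (hcompl : IsCompl W₁ W₂) :
    W₁ = ⊥ ∨ W₂ = ⊥ := by
  obtain ⟨χt, hχt⟩ := hext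
  set M := ↥(indSpace Γ R H χ) with hM
  set ρ : Γ →* Module.End R M := indRho χt with hρ
  -- H is in the kernel of ρ
  have hker : ∀ x ∈ H, ρ.toHomUnits x = 1 := by
    intro h hh
    refine Units.ext (LinearMap.ext fun f => Subtype.ext (funext fun x => ?_))
    show (χt h : R)⁻¹ * (f : Γ → R) (x * h) = (f : Γ → R) x
    have hc : x * h * x⁻¹ ∈ H := ‹H.Normal›.conj_mem h hh x
    have e1 : x * h = (⟨x * h * x⁻¹, hc⟩ : H) * x := by
      push_cast; group
    have e2 : (f : Γ → R) (x * h) = (χ ⟨x * h * x⁻¹, hc⟩ : R) * (f : Γ → R) x := by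
      have e2' : (f : Γ → R) ((x * h * x⁻¹) * x) = (χ ⟨x * h * x⁻¹, hc⟩ : R) * (f : Γ → R) x :=
        f.2 ⟨x * h * x⁻¹, hc⟩ x
      rwa [inv_mul_cancel_right] at e2'
    have e3 : χt (x * h * x⁻¹) = χt h := by
      rw [map_mul, map_mul, map_inv, mul_comm (χt x), mul_assoc, mul_inv_cancel, mul_one]
    have e4 : (χ ⟨x * h * x⁻¹, hc⟩ : Rˣ) = χt h :=
      (hχt ⟨x * h * x⁻¹, hc⟩).symm.trans e3
    rw [e2, e4, inv_mul_cancel_left₀ (Units.ne_zero _)]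
  -- the action descends to the quotient
  set ρbar : Γ ⧸ H →* Module.End R M :=
    (Units.coeHom (Module.End R M)).comp (QuotientGroup.lift H ρ.toHomUnits hker) with hρbar
  have hbar : ∀ γ : Γ, ρbar ((γ : Γ ⧸ H)) = ρ γ := fun γ => rfl
  -- the distinguished vector χt viewed in the induced space
  have heMem : (fun x => (χt x : R)) ∈ indSpace Γ R H χ := by
    intro h g
    show (χt (↑h * g) : R) = (χ h : R) * (χt g : R)
    rw [map_mul, Units.val_mul, hχt]
  set e : M := ⟨fun x => (χt x : R), heMem⟩ with he
  have he0 : e ≠ 0 := by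
    intro h
    have := congrFun (congrArg Subtype.val h) 1
    simp [he] at this
  -- main argument: a nonzero stable submodule contains e
  have key : ∀ W : Submodule R M, W ≠ ⊥ →
      (∀ γ : Γ, ∀ f ∈ W, translateInd Γ R H χ γ f ∈ W) → e ∈ W := by
    intro W hW hstab
    obtain ⟨v, hvW, hv⟩ := Submodule.exists_mem_ne_zero_of_ne_bot hW
    obtain ⟨w, hw0, hwfix, hwspan⟩ :=
      aux_fixed ℓ hℓ (Γ ⧸ H) hpgroup R hchar M ρbar v hv
    have horb : ∀ g : Γ ⧸ H, ρbar g v ∈ W := by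
      intro g
      obtain ⟨γ, rfl⟩ := QuotientGroup.mk_surjective g
      rw [hbar γ]
      exact W.smul_mem _ (hstab γ v hvW)
    have hwW : w ∈ W :=
      (Submodule.span_le.2 (Set.range_subset_iff.2 horb)) hwspan
    have hwval : ∀ γ x : Γ, (w : Γ → R) (x * γ) = (χt γ : R) * (w : Γ → R) x := by
      intro γ x
      have h5 : (χt γ : R)⁻¹ * (w : Γ → R) (x * γ) = (w : Γ → R) x :=
        congrFun (congrArg Subtype.val (hwfix (γ : Γ ⧸ H))) x
      rw [← h5, mul_inv_cancel_left₀ (Units.ne_zero _)]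
    have hc0 : (w : Γ → R) 1 ≠ 0 := by
      intro hc
      apply hw0
      apply Subtype.ext; funext γ
      have := hwval γ 1
      rw [one_mul] at this
      rw [this, hc, mul_zero]
      rfl
    have hee : e = ((w : Γ → R) 1)⁻¹ • w := by
      apply Subtype.ext; funext γ
      show (χt γ : R) = ((w : Γ → R) 1)⁻¹ * (w : Γ → R) γ
      have := hwval γ 1
      rw [one_mul] at this
      rw [this, mul_comm ((χt γ : R)) ((w : Γ → R) 1), inv_mul_cancel_left₀ hc0]
    rw [hee]
    exact W.smul_mem _ hwW
  by_contra hcon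
  push_neg at hcon
  have h1 := key W₁ hcon.1 hW₁
  have h2 := key W₂ hcon.2 hW₂
  have : e ∈ W₁ ⊓ W₂ := ⟨h1, h2⟩
  rw [hcompl.inf_eq_bot] at this
  exact he0 this
end
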